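/- arXiv:1908.06051 — 6 statements merged into one kernel-verified Lean document; each statement's English description precedes it below -/
import Mathlib

section
/- If a graph G of order n admits a prime labeling (an injective assignment of labels from {1,...,n} to the vertices such that adjacent vertices receive coprime labels), then the independence number of G is at least ⌊n/2⌋. -/
lemma evens_card (n : ℕ) :
    ((Finset.Icc 1 n).filter (fun m => 2 ∣ m)).card = n / 2 := by
  have h : (Finset.Icc 1 n).filter (fun m => 2 ∣ m) =
      (Finset.Icc 1 (n / 2)).image (fun k => 2 * k) := by
    ext m
    simp only [Finset.mem_filter, Finset.mem_Icc, Finset.mem_image]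
    constructor
    · rintro ⟨⟨h1, h2⟩, k, rfl⟩
      exact ⟨k, ⟨by omega, by omega⟩, rfl⟩
    · rintro ⟨k, ⟨h1, h2⟩, rfl⟩
      exact ⟨⟨by omega, by omega⟩, k, rfl⟩
  rw [h, Finset.card_image_of_injective _ (fun a b h => by omega)]
  simp

theorem prime_labeling_indep_bound {V : Type*} [Fintype V] (G : SimpleGraph V)
    (f : V → ℕ) (hinj : Function.Injective f)
    (hrange : ∀ v, f v ∈ Finset.Icc 1 (Fintype.card V))
    (hcop : ∀ v w, G.Adj v w → Nat.Coprime (f v) (f w)) :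
    ∃ s : Finset V, (∀ x ∈ s, ∀ y ∈ s, ¬ G.Adj x y) ∧
      Fintype.card V / 2 ≤ s.card := by
  set n := Fintype.card V
  refine ⟨Finset.univ.filter (fun v => 2 ∣ f v), ?_, ?_⟩
  · intro x hx y hy hadj
    simp only [Finset.mem_filter] at hx hy
    have := hcop x y hadj
    have h2 : 2 ∣ Nat.gcd (f x) (f y) := Nat.dvd_gcd hx.2 hy.2
    rw [this] at h2
    omega
  · -- f restricted to V is injective into Icc 1 n; it's surjective
    have hsurj : ∀ m ∈ Finset.Icc 1 n, ∃ v, f v = m := by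
      have himg : Finset.univ.image f = Finset.Icc 1 n := by
        apply Finset.eq_of_subset_of_card_le
        · intro m hm
          simp only [Finset.mem_image] at hm
          obtain ⟨v, _, rfl⟩ := hm
          exact hrange v
        · rw [Finset.card_image_of_injective _ hinj, Nat.card_Icc]
          simp [n]
      intro m hm
      rw [← himg] at hm
      simp only [Finset.mem_image, Finset.mem_univ, true_and] at hm
      exact hm
    have himg2 : (Finset.univ.filter (fun v => 2 ∣ f v)).image f =
        (Finset.Icc 1 n).filter (fun m => 2 ∣ m) := by
      ext m
      simp only [Finset.mem_image, Finset.mem_filter, Finset.mem_univ, true_and]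
      constructor
      · rintro ⟨v, hv, rfl⟩
        exact ⟨hrange v, hv⟩
      · rintro ⟨hm, hd⟩
        obtain ⟨v, rfl⟩ := hsurj m hm
        exact ⟨v, hd, rfl⟩
    have := evens_card n
    rw [← himg2, Finset.card_image_of_injective _ hinj] at this
    omega
end

section
/- If n is an odd prime, then the prism graph GP(n,1) admits a coprime labeling with largest label 2n+1; explicitly, the labeling assigning i to v_i for 1 ≤ i ≤ n, n+i to u_i for 1 ≤ i ≤ n−1, and 2n+1 to u_n, gives coprime labels to every pair of adjacent vertices. -/
/-- The prism graph `GP(n,1)`: two `n`-cycles `v` (inl) and `u` (inr) joined by a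
perfect matching. -/
def prismGraph (n : ℕ) : SimpleGraph (ZMod n ⊕ ZMod n) :=
  SimpleGraph.fromRel (fun x y =>
    (∃ i : ZMod n, x = Sum.inl i ∧ y = Sum.inl (i + 1)) ∨
    (∃ i : ZMod n, x = Sum.inr i ∧ y = Sum.inr (i + 1)) ∨
    (∃ i : ZMod n, x = Sum.inl i ∧ y = Sum.inr i))

/-- The labeling of Theorem (n prime): `v_i ↦ i` (1-based), `u_i ↦ n+i` for `i ≤ n-1`,
`u_n ↦ 2n+1`.  Here the vertex with value `j` represents index `j+1`. -/
def prismLabel (n : ℕ) : ZMod n ⊕ ZMod n → ℕ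
  | Sum.inl i => i.val + 1
  | Sum.inr i => if i.val = n - 1 then 2 * n + 1 else n + i.val + 1

lemma coprime_of_eq (a b x y : ℕ) (h : x * a = y * b + 1) : Nat.Coprime a b := by
  have h1 : Nat.gcd a b ∣ x * a := (Nat.gcd_dvd_left a b).mul_left x
  have h2 : Nat.gcd a b ∣ y * b := (Nat.gcd_dvd_right a b).mul_left y
  have h3 : Nat.gcd a b ∣ 1 := by
    have hd := Nat.dvd_sub h1 h2
    have he : x * a - y * b = 1 := by omega
    rwa [he] at hd
  exact Nat.dvd_one.mp h3

theorem prism_coprime_labeling_of_prime (n : ℕ) (hn : 3 ≤ n) (hodd : Odd n)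
    (hp : Nat.Prime n) :
    Function.Injective (prismLabel n) ∧
    (∀ x, prismLabel n x ∈ Finset.Icc 1 (2 * n + 1)) ∧
    (∃ x, prismLabel n x = 2 * n + 1) ∧
    (∀ x y, (prismGraph n).Adj x y →
      Nat.Coprime (prismLabel n x) (prismLabel n y)) := by
  haveI : NeZero n := ⟨by omega⟩
  haveI : Fact (1 < n) := ⟨by omega⟩
  refine ⟨?_, ?_, ?_, ?_⟩
  · rintro (i | i) (j | j) h <;> simp only [prismLabel] at h
    · exact congrArg Sum.inl (ZMod.val_injective n (by omega))
    · exfalso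
      have hi := ZMod.val_lt i
      split_ifs at h <;> omega
    · exfalso
      have hj := ZMod.val_lt j
      split_ifs at h <;> omega
    · have hi := ZMod.val_lt i
      have hj := ZMod.val_lt j
      split_ifs at h with h1 h2 h2 <;>
        exact congrArg Sum.inr (ZMod.val_injective n (by omega))
  · rintro (i | i) <;> simp only [prismLabel, Finset.mem_Icc]
    · have := ZMod.val_lt i; omega
    · have := ZMod.val_lt i; split_ifs <;> omega
  · refine ⟨Sum.inr ((n - 1 : ℕ) : ZMod n), ?_⟩
    simp only [prismLabel, ZMod.val_natCast]
    rw [Nat.mod_eq_of_lt (by omega : n - 1 < n), if_pos rfl]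
  · have key : ∀ a b : ZMod n ⊕ ZMod n,
        ((∃ i : ZMod n, a = Sum.inl i ∧ b = Sum.inl (i + 1)) ∨
         (∃ i : ZMod n, a = Sum.inr i ∧ b = Sum.inr (i + 1)) ∨
         (∃ i : ZMod n, a = Sum.inl i ∧ b = Sum.inr i)) →
        Nat.Coprime (prismLabel n a) (prismLabel n b) := by
      rintro a b (⟨i, rfl, rfl⟩ | ⟨i, rfl, rfl⟩ | ⟨i, rfl, rfl⟩) <;>
          simp only [prismLabel] <;>
          have hi := ZMod.val_lt i <;>
          have hv : (i + 1).val = (i.val + 1) % n := by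
            rw [ZMod.val_add, ZMod.val_one]
      · rw [hv]
        by_cases hlt : i.val + 1 < n
        · rw [Nat.mod_eq_of_lt hlt]
          simp
        · have he : (i.val + 1) % n = 0 := by
            have : i.val + 1 = n := by omega
            simp [this]
          rw [he]
          exact Nat.coprime_one_right _
      · rw [hv]
        by_cases h1 : i.val = n - 1
        · rw [if_pos h1]
          have he : (i.val + 1) % n = 0 := by
            have : i.val + 1 = n := by omega
            simp [this]
          rw [he, if_neg (by omega)]
          exact (coprime_of_eq (n + 1) (2 * n + 1) 2 1 (by ring)).symm
        · rw [if_neg h1]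
          by_cases h2 : i.val = n - 2
          · have e1 : (i.val + 1) % n = n - 1 := by
              rw [Nat.mod_eq_of_lt (by omega)]; omega
            rw [e1, if_pos rfl]
            obtain ⟨k, hk'⟩ : ∃ k, i.val = k := ⟨_, rfl⟩
            rw [hk'] at h2 ⊢
            exact coprime_of_eq _ _ (k + 2) (k + 1)
              (by have en : n = k + 2 := by omega
                  rw [en]; ring)
          · have e1 : (i.val + 1) % n = i.val + 1 := Nat.mod_eq_of_lt (by omega)
            rw [e1, if_neg (by omega)]
            show Nat.Coprime (n + i.val + 1) ((n + i.val + 1) + 1)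
            simp
      · by_cases h1 : i.val = n - 1
        · rw [if_pos h1]
          have : i.val + 1 = n := by omega
          rw [this]
          exact (coprime_of_eq (2 * n + 1) n 1 2 (by ring)).symm
        · rw [if_neg h1]
          have hcp : Nat.Coprime (i.val + 1) n := by
            refine Nat.Coprime.symm ((hp.coprime_iff_not_dvd).mpr ?_)
            intro hd
            have := Nat.le_of_dvd (by omega) hd
            omega
          have : Nat.Coprime (i.val + 1) (n + (i.val + 1)) := by
            unfold Nat.Coprime
            rw [Nat.gcd_add_self_right]
            exact hcp
          show Nat.Coprime (i.val + 1) (n + i.val + 1)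
          rwa [show n + i.val + 1 = n + (i.val + 1) from rfl]
    intro x y hxy
    rw [prismGraph, SimpleGraph.fromRel_adj] at hxy
    rcases hxy.2 with h | h
    · exact key _ _ h
    · exact (key _ _ h).symm
end

section
/- For n ≥ 3 odd, the independence number of the prism graph GP(n,1) equals n − 1; in particular, GP(n,1) is not prime (no prime labeling exists), so any coprime labeling of GP(n,1) must use a label of at least 2n+1. -/
/-- A finset of vertices is independent if no two of its members are adjacent. -/
def IsIndepFinset {V : Type*} (G : SimpleGraph V) (s : Finset V) : Prop :=
  ∀ x ∈ s, ∀ y ∈ s, ¬ G.Adj x y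

lemma cast_inj_aux {n : ℕ} [NeZero n] {i j : ℕ} (hi : i < n) (hj : j < n)
    (h : (i : ZMod n) = j) : i = j := by
  have := congrArg ZMod.val h
  rwa [ZMod.val_cast_of_lt hi, ZMod.val_cast_of_lt hj] at this

lemma succ_eq_aux {n : ℕ} [NeZero n] {i j : ℕ} (hi : i + 1 < n) (hj : j < n)
    (h : (j : ZMod n) = (i : ZMod n) + 1) : j = i + 1 := by
  apply cast_inj_aux hj hi
  rw [h]; push_cast; ring


theorem prism_odd_indepNum_and_not_prime (n : ℕ) (hn : 3 ≤ n) (hodd : Odd n) :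
    -- the independence number of GP(n,1) equals n - 1
    ((∃ s : Finset (ZMod n ⊕ ZMod n), IsIndepFinset (prismGraph n) s ∧ s.card = n - 1) ∧
      (∀ s : Finset (ZMod n ⊕ ZMod n), IsIndepFinset (prismGraph n) s → s.card ≤ n - 1)) ∧
    -- GP(n,1) admits no prime labeling
    (¬ ∃ f : ZMod n ⊕ ZMod n → ℕ, Function.Injective f ∧
        (∀ x, f x ∈ Finset.Icc 1 (2 * n)) ∧
        (∀ x y, (prismGraph n).Adj x y → Nat.Coprime (f x) (f y))) ∧
    -- any coprime labeling uses a label of size at least 2n+1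
    (∀ f : ZMod n ⊕ ZMod n → ℕ, Function.Injective f → (∀ x, 1 ≤ f x) →
      (∀ x y, (prismGraph n).Adj x y → Nat.Coprime (f x) (f y)) →
      ∃ x, 2 * n + 1 ≤ f x) := by 
  haveI : NeZero n := ⟨by omega⟩
  haveI : Fact (1 < n) := ⟨by omega⟩
  -- existence of independent set of size n - 1
  have hexists : ∃ s : Finset (ZMod n ⊕ ZMod n),
      IsIndepFinset (prismGraph n) s ∧ s.card = n - 1 := by
    classical
    set A : Finset ℕ := (Finset.range (n-1)).filter (fun i => i % 2 = 0) with hA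
    set B : Finset ℕ := (Finset.range (n-1)).filter (fun i => ¬ i % 2 = 0) with hB
    set gl : ℕ → ZMod n ⊕ ZMod n := fun i => Sum.inl ((i : ℕ) : ZMod n) with hgl
    set gr : ℕ → ZMod n ⊕ ZMod n := fun i => Sum.inr ((i : ℕ) : ZMod n) with hgr
    refine ⟨A.image gl ∪ B.image gr, ?_, ?_⟩
    · intro x hx y hy hadj
      simp only [Finset.mem_union, Finset.mem_image, hA, hB, hgl, hgr, Finset.mem_filter,
        Finset.mem_range] at hx hy
      rcases hx with ⟨i, ⟨hi1, hi2⟩, rfl⟩ | ⟨i, ⟨hi1, hi2⟩, rfl⟩ <;>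
        rcases hy with ⟨j, ⟨hj1, hj2⟩, rfl⟩ | ⟨j, ⟨hj1, hj2⟩, rfl⟩ <;>
        simp [prismGraph, SimpleGraph.fromRel_adj, hgl, hgr] at hadj
      · rcases hadj.2 with h | h
        · have := succ_eq_aux (n := n) (i := i) (j := j) (by omega) (by omega) h; omega
        · have := succ_eq_aux (n := n) (i := j) (j := i) (by omega) (by omega) h; omega
      · have := cast_inj_aux (n := n) (i := j) (j := i) (by omega) (by omega) hadj; omega
      · have := cast_inj_aux (n := n) (i := i) (j := j) (by omega) (by omega) hadj; omega
      · rcases hadj.2 with h | h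
        · have := succ_eq_aux (n := n) (i := i) (j := j) (by omega) (by omega) h; omega
        · have := succ_eq_aux (n := n) (i := j) (j := i) (by omega) (by omega) h; omega
    · rw [Finset.card_union_of_disjoint (by simp [hgl, hgr, Finset.disjoint_left])]
      have c1 : (A.image gl).card = A.card := by
        apply Finset.card_image_of_injOn
        intro i hi j hj hij
        simp only [hgl, Sum.inl.injEq] at hij
        simp only [hA, Finset.mem_coe, Finset.mem_filter, Finset.mem_range] at hi hj
        exact cast_inj_aux (by omega) (by omega) hij
      have c2 : (B.image gr).card = B.card := by
        apply Finset.card_image_of_injOn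
        intro i hi j hj hij
        simp only [hgr, Sum.inr.injEq] at hij
        simp only [hB, Finset.mem_coe, Finset.mem_filter, Finset.mem_range] at hi hj
        exact cast_inj_aux (by omega) (by omega) hij
      rw [c1, c2, hA, hB, Finset.card_filter_add_card_filter_not, Finset.card_range]
  -- upper bound
  have hupper : ∀ s : Finset (ZMod n ⊕ ZMod n),
      IsIndepFinset (prismGraph n) s → s.card ≤ n - 1 := by
    classical
    intro s hs
    have hinj : Set.InjOn (Sum.elim id id : ZMod n ⊕ ZMod n → ZMod n) s := by
      intro x hx y hy hxy
      by_contra hne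
      apply hs x hx y hy
      rcases x with a | a <;> rcases y with b | b <;>
        simp only [Sum.elim_inl, Sum.elim_inr, id] at hxy <;> subst hxy <;>
        simp [prismGraph, SimpleGraph.fromRel_adj] at hne ⊢
    have hle : s.card ≤ n := by
      rw [← Finset.card_image_of_injOn hinj]
      calc (s.image _).card ≤ Fintype.card (ZMod n) := Finset.card_le_univ _
        _ = n := ZMod.card n
    by_contra hgt
    have hcard : s.card = n := by omega
    have himg : s.image (Sum.elim id id : ZMod n ⊕ ZMod n → ZMod n) = Finset.univ := by
      apply Finset.eq_univ_of_card
      rw [Finset.card_image_of_injOn hinj, hcard, ZMod.card n]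
    have hsurj : ∀ i : ZMod n, Sum.inl i ∈ s ∨ Sum.inr i ∈ s := by
      intro i
      have : i ∈ s.image (Sum.elim id id : ZMod n ⊕ ZMod n → ZMod n) := by
        rw [himg]; exact Finset.mem_univ i
      rw [Finset.mem_image] at this
      obtain ⟨x, hx, hxi⟩ := this
      rcases x with a | a <;> simp only [Sum.elim_inl, Sum.elim_inr, id] at hxi <;>
        subst hxi
      · exact Or.inl hx
      · exact Or.inr hx
    set b : ZMod n → Bool := fun i => decide (Sum.inl i ∈ s) with hb
    have step : ∀ i : ZMod n, b (i + 1) = !b i := by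
      intro i
      by_cases h : Sum.inl i ∈ s
      · have h1 : Sum.inl (i + 1) ∉ s := by
          intro h2
          exact hs _ h _ h2 (by simp [prismGraph, SimpleGraph.fromRel_adj])
        simp [hb, h, h1]
      · have h2 : Sum.inr i ∈ s := (hsurj i).resolve_left h
        have h3 : Sum.inr (i + 1) ∉ s := by
          intro h4
          exact hs _ h2 _ h4 (by simp [prismGraph, SimpleGraph.fromRel_adj])
        have h5 : Sum.inl (i + 1) ∈ s := (hsurj (i + 1)).resolve_right h3
        simp [hb, h, h5]
    have iter : ∀ k : ℕ, ∀ i : ZMod n,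
        b (i + (k : ZMod n)) = (if k % 2 = 0 then b i else !b i) := by
      intro k
      induction k with
      | zero => intro i; simp
      | succ k ih =>
        intro i
        have hc : (((k : ℕ) + 1 : ℕ) : ZMod n) = (k : ZMod n) + 1 := by push_cast; ring
        rw [hc, ← add_assoc, step, ih]
        by_cases hk : k % 2 = 0
        · rw [if_pos hk, if_neg (by omega)]
        · rw [if_neg hk, if_pos (by omega), Bool.not_not]
    have hfin := iter n 0
    rw [ZMod.natCast_self, if_neg (by have := Nat.odd_iff.mp hodd; omega)] at hfin
    simp at hfin
  -- not prime
  have hnotprime : ¬ ∃ f : ZMod n ⊕ ZMod n → ℕ, Function.Injective f ∧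
      (∀ x, f x ∈ Finset.Icc 1 (2 * n)) ∧
      (∀ x y, (prismGraph n).Adj x y → Nat.Coprime (f x) (f y)) := by
    rintro ⟨f, hfi, hfr, hfc⟩
    classical
    have hcardV : Fintype.card (ZMod n ⊕ ZMod n) = 2 * n := by
      simp [ZMod.card n]; ring
    have himg : Finset.univ.image f = Finset.Icc 1 (2 * n) := by
      apply Finset.eq_of_subset_of_card_le
      · intro m hm
        rw [Finset.mem_image] at hm
        obtain ⟨x, _, rfl⟩ := hm
        exact hfr x
      · rw [Nat.card_Icc, Finset.card_image_of_injective _ hfi, Finset.card_univ, hcardV]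
        omega
    set E : Finset (ZMod n ⊕ ZMod n) := Finset.univ.filter (fun x => Even (f x)) with hE
    have hEindep : IsIndepFinset (prismGraph n) E := by
      intro x hx y hy hadj
      simp only [hE, Finset.mem_filter] at hx hy
      have hco := hfc x y hadj
      have h2x : 2 ∣ f x := hx.2.two_dvd
      have h2y : 2 ∣ f y := hy.2.two_dvd
      have hg : (2 : ℕ) ∣ Nat.gcd (f x) (f y) := Nat.dvd_gcd h2x h2y
      rw [Nat.Coprime] at hco
      omega
    have hEcard : E.card = n := by
      have h1 : E.image f = (Finset.univ.image f).filter Even := by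
        ext m
        simp only [hE, Finset.mem_image, Finset.mem_filter, Finset.mem_univ, true_and]
        constructor
        · rintro ⟨x, hx, rfl⟩; exact ⟨⟨x, rfl⟩, hx⟩
        · rintro ⟨⟨x, rfl⟩, hx⟩; exact ⟨x, hx, rfl⟩
      rw [himg] at h1
      have h2 : ((Finset.Icc 1 (2 * n)).filter Even).card = n := by
        have h3 : (Finset.Icc 1 n).image (fun k => 2 * k) =
            (Finset.Icc 1 (2 * n)).filter Even := by
          ext m
          simp only [Finset.mem_image, Finset.mem_filter, Finset.mem_Icc, Nat.even_iff]
          constructor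
          · rintro ⟨k, ⟨ha, hb⟩, rfl⟩; omega
          · rintro ⟨⟨ha, hb⟩, hc⟩; exact ⟨m / 2, by omega, by omega⟩
        rw [← h3, Finset.card_image_of_injective _ (fun a b h => by omega), Nat.card_Icc]
        omega
      rw [← Finset.card_image_of_injective E hfi, h1, h2]
    have := hupper E hEindep
    omega
  refine ⟨⟨hexists, hupper⟩, hnotprime, ?_⟩
  intro f hfi hf1 hfc
  by_contra hbig
  push_neg at hbig
  exact hnotprime ⟨f, hfi, fun x => Finset.mem_Icc.mpr ⟨hf1 x, by have := hbig x; omega⟩, hfc⟩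
end

section
/- Any coprime labeling of the generalized Petersen graph GP(5m,2) (m ≥ 1) has largest label at least 12m − 1. -/
/-- The generalized Petersen graph `GP(n,k)`: outer cycle `v` (inl) with edges
`v_i v_{i+1}`, inner vertices `u` (inr) with edges `u_i u_{i+k}` (indices mod `n`),
and spokes `v_i u_i`. -/
def genPetersen (n k : ℕ) : SimpleGraph (ZMod n ⊕ ZMod n) :=
  SimpleGraph.fromRel (fun x y =>
    (∃ i : ZMod n, x = Sum.inl i ∧ y = Sum.inl (i + 1)) ∨
    (∃ i : ZMod n, x = Sum.inr i ∧ y = Sum.inr (i + (k : ZMod n))) ∨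
    (∃ i : ZMod n, x = Sum.inl i ∧ y = Sum.inr i))

/-- The adjacency pattern inside one block of 10 vertices of `GP(5m,2)`. -/
def bRel : Fin 5 ⊕ Fin 5 → Fin 5 ⊕ Fin 5 → Bool
| Sum.inl a, Sum.inl b => b.val == a.val + 1
| Sum.inr a, Sum.inr b => b.val == a.val + 2
| Sum.inl a, Sum.inr b => a == b
| _, _ => false

lemma ite_pair_le {p q : Prop} [Decidable p] [Decidable q] (h : p → q → False) :
    (if p then 1 else 0) + (if q then 1 else 0) ≤ 1 := by
  split_ifs with h1 h2 <;> simp_all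

/-- The block graph has independence number 4. -/
lemma block_indep (T : Finset (Fin 5 ⊕ Fin 5))
    (h : ∀ x y, x ∈ T → y ∈ T → bRel x y = false) : T.card ≤ 4 := by
  have hcard : T.card = ∑ x : Fin 5 ⊕ Fin 5, if x ∈ T then 1 else 0 := by
    rw [← Finset.filter_univ_mem T, Finset.card_filter]; simp
  rw [Fintype.sum_sum_type, Fin.sum_univ_five, Fin.sum_univ_five] at hcard
  have e : ∀ x y : Fin 5 ⊕ Fin 5, bRel x y = true →
      (if x ∈ T then 1 else 0) + (if y ∈ T then 1 else 0) ≤ 1 := by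
    intro x y hb
    exact ite_pair_le (fun hx hy => by rw [h x y hx hy] at hb; exact Bool.false_ne_true hb)
  have e1 := e (Sum.inl 0) (Sum.inl 1) (by decide)
  have e2 := e (Sum.inl 1) (Sum.inl 2) (by decide)
  have e3 := e (Sum.inl 2) (Sum.inl 3) (by decide)
  have e4 := e (Sum.inl 3) (Sum.inl 4) (by decide)
  have e5 := e (Sum.inr 0) (Sum.inr 2) (by decide)
  have e6 := e (Sum.inr 1) (Sum.inr 3) (by decide)
  have e7 := e (Sum.inr 2) (Sum.inr 4) (by decide)
  have s0 := e (Sum.inl 0) (Sum.inr 0) (by decide)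
  have s1 := e (Sum.inl 1) (Sum.inr 1) (by decide)
  have s2 := e (Sum.inl 2) (Sum.inr 2) (by decide)
  have s3 := e (Sum.inl 3) (Sum.inr 3) (by decide)
  have s4 := e (Sum.inl 4) (Sum.inr 4) (by decide)
  omega

theorem gp5m2_coprime_labeling_lower_bound (m : ℕ) (hm : 1 ≤ m)
    (f : ZMod (5 * m) ⊕ ZMod (5 * m) → ℕ) (hinj : Function.Injective f)
    (hpos : ∀ x, 1 ≤ f x)
    (hcop : ∀ x y, (genPetersen (5 * m) 2).Adj x y → Nat.Coprime (f x) (f y)) :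
    ∃ x, 12 * m - 1 ≤ f x := by
  classical
  by_contra hcon
  push_neg at hcon
  haveI : NeZero (5 * m) := ⟨by omega⟩
  haveI : Fact (1 < 5 * m) := ⟨by omega⟩
  -- index and block maps
  let idx : ZMod (5 * m) ⊕ ZMod (5 * m) → ℕ := fun x => Sum.elim ZMod.val ZMod.val x
  have hidx : ∀ x, idx x < 5 * m := by intro x; cases x <;> exact ZMod.val_lt _
  let ρ : ZMod (5 * m) ⊕ ZMod (5 * m) → Fin 5 ⊕ Fin 5 :=
    Sum.map (fun i : ZMod (5 * m) => (⟨i.val % 5, Nat.mod_lt _ (by norm_num)⟩ : Fin 5))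
            (fun i : ZMod (5 * m) => (⟨i.val % 5, Nat.mod_lt _ (by norm_num)⟩ : Fin 5))
  -- set of even-labelled vertices
  let S : Finset (ZMod (5 * m) ⊕ ZMod (5 * m)) := Finset.univ.filter fun x => Even (f x)
  have hSind : ∀ x ∈ S, ∀ y ∈ S, ¬ (genPetersen (5 * m) 2).Adj x y := by
    intro x hx y hy hadj
    have hc : Nat.gcd (f x) (f y) = 1 := hcop x y hadj
    simp only [S, Finset.mem_filter, Finset.mem_univ, true_and] at hx hy
    obtain ⟨a, ha⟩ := hx
    obtain ⟨b, hb⟩ := hy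
    have h2 : 2 ∣ Nat.gcd (f x) (f y) := Nat.dvd_gcd ⟨a, by omega⟩ ⟨b, by omega⟩
    rw [hc] at h2
    omega
  -- within a block, the pattern `bRel` forces adjacency in `GP(n,2)`
  have h2ne : ((2 : ℕ) : ZMod (5 * m)) ≠ 0 := by
    intro h
    have hv := ZMod.val_cast_of_lt (show (2 : ℕ) < 5 * m by omega)
    rw [h, ZMod.val_zero] at hv
    omega
  have hedge : ∀ x y, idx x / 5 = idx y / 5 → bRel (ρ x) (ρ y) = true →
      (genPetersen (5 * m) 2).Adj x y := by
    intro x y hb hr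
    rcases x with i | i <;> rcases y with j | j
    · -- outer edge
      simp only [ρ, Sum.map_inl, bRel, beq_iff_eq] at hr
      have hv : j.val = i.val + 1 := by
        have di := Nat.div_add_mod i.val 5
        have dj := Nat.div_add_mod j.val 5
        simp only [idx, Sum.elim_inl] at hb
        omega
      have hj : j = i + 1 := by
        have : ((j.val : ℕ) : ZMod (5 * m)) = ((i.val + 1 : ℕ) : ZMod (5 * m)) := by rw [hv]
        rwa [ZMod.natCast_rightInverse j, Nat.cast_add, Nat.cast_one,
          ZMod.natCast_rightInverse i] at this
      rw [genPetersen, SimpleGraph.fromRel_adj]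
      refine ⟨?_, Or.inl (Or.inl ⟨i, rfl, by rw [hj]⟩)⟩
      simp only [ne_eq, Sum.inl.injEq]
      intro he
      rw [hj] at he
      exact one_ne_zero (left_eq_add.mp he)
    · simp only [ρ, Sum.map_inl, Sum.map_inr, bRel, beq_iff_eq, Fin.mk.injEq] at hr
      have hv : i.val = j.val := by
        simp only [idx, Sum.elim_inl, Sum.elim_inr] at hb
        have di := Nat.div_add_mod i.val 5
        have dj := Nat.div_add_mod j.val 5
        omega
      have hij : i = j := ZMod.val_injective (5 * m) hv
      subst hij
      rw [genPetersen, SimpleGraph.fromRel_adj]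
      exact ⟨by simp, Or.inl (Or.inr (Or.inr ⟨i, rfl, rfl⟩))⟩
    · simp [ρ, bRel] at hr
    · -- inner edge
      simp only [ρ, Sum.map_inr, bRel, beq_iff_eq] at hr
      have hv : j.val = i.val + 2 := by
        have di := Nat.div_add_mod i.val 5
        have dj := Nat.div_add_mod j.val 5
        simp only [idx, Sum.elim_inr] at hb
        omega
      have hj : j = i + ((2 : ℕ) : ZMod (5 * m)) := by
        have : ((j.val : ℕ) : ZMod (5 * m)) = ((i.val + 2 : ℕ) : ZMod (5 * m)) := by rw [hv]
        rwa [ZMod.natCast_rightInverse j, Nat.cast_add,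
          ZMod.natCast_rightInverse i] at this
      rw [genPetersen, SimpleGraph.fromRel_adj]
      refine ⟨?_, Or.inl (Or.inr (Or.inl ⟨i, rfl, by rw [hj]⟩))⟩
      simp only [ne_eq, Sum.inr.injEq]
      intro he
      rw [hj] at he
      exact h2ne (left_eq_add.mp he)
  -- each block contains at most 4 even-labelled vertices
  have hfiber : ∀ j, (S.filter fun x => idx x / 5 = j).card ≤ 4 := by
    intro j
    set F := S.filter fun x => idx x / 5 = j with hF
    have hblk : ∀ x ∈ F, idx x / 5 = j := fun x hx => (Finset.mem_filter.mp hx).2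
    have hmemS : ∀ x ∈ F, x ∈ S := fun x hx => (Finset.mem_filter.mp hx).1
    have hinjρ : Set.InjOn ρ F := by
      intro x hx y hy hxy
      have hbx := hblk x hx
      have hby := hblk y hy
      rcases x with a | a <;> rcases y with b | b <;>
        simp only [ρ, Sum.map_inl, Sum.map_inr, Sum.inl.injEq, Sum.inr.injEq,
          Fin.mk.injEq, reduceCtorEq] at hxy
      · have : a.val = b.val := by
          simp only [idx, Sum.elim_inl] at hbx hby
          have da := Nat.div_add_mod a.val 5
          have db := Nat.div_add_mod b.val 5
          omega
        exact congrArg Sum.inl (ZMod.val_injective (5 * m) this)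
      · have : a.val = b.val := by
          simp only [idx, Sum.elim_inr] at hbx hby
          have da := Nat.div_add_mod a.val 5
          have db := Nat.div_add_mod b.val 5
          omega
        exact congrArg Sum.inr (ZMod.val_injective (5 * m) this)
    have h1 : F.card = (F.image ρ).card := (Finset.card_image_of_injOn hinjρ).symm
    have h2 : ∀ x y, x ∈ F.image ρ → y ∈ F.image ρ → bRel x y = false := by
      intro x y hx hy
      obtain ⟨x', hx', rfl⟩ := Finset.mem_image.mp hx
      obtain ⟨y', hy', rfl⟩ := Finset.mem_image.mp hy
      by_contra hb
      rw [Bool.not_eq_false] at hb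
      exact hSind x' (hmemS x' hx') y' (hmemS y' hy')
        (hedge x' y' (by rw [hblk x' hx', hblk y' hy']) hb)
    rw [h1]
    exact block_indep _ h2
  -- hence at most 4m even labels
  have hScard : S.card ≤ 4 * m := by
    have hmap : ∀ x ∈ S, idx x / 5 ∈ Finset.range m := by
      intro x _
      rw [Finset.mem_range]
      have := hidx x
      omega
    rw [Finset.card_eq_sum_card_fiberwise hmap]
    calc ∑ j ∈ Finset.range m, (S.filter fun x => idx x / 5 = j).card
        ≤ ∑ j ∈ Finset.range m, 4 := Finset.sum_le_sum fun j _ => hfiber j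
      _ = 4 * m := by simp [mul_comm]
  -- at least 6m odd labels
  let O : Finset (ZMod (5 * m) ⊕ ZMod (5 * m)) := Finset.univ.filter fun x => ¬ Even (f x)
  have hVcard : Fintype.card (ZMod (5 * m) ⊕ ZMod (5 * m)) = 10 * m := by
    rw [Fintype.card_sum, ZMod.card]
    omega
  have hSO : S.card + O.card = 10 * m := by
    rw [← hVcard, ← Finset.card_univ]
    exact Finset.card_filter_add_card_filter_not _
  have hO : 6 * m ≤ O.card := by omega
  -- odd labels are distinct odd numbers below 12m-1: at most 6m-1 of them
  have hmapO : ∀ x ∈ O, (f x - 1) / 2 ∈ Finset.range (6 * m - 1) := by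
    intro x hx
    simp only [O, Finset.mem_filter, Finset.mem_univ, true_and,
      Nat.not_even_iff_odd] at hx
    obtain ⟨t, ht⟩ := hx
    have h1 := hcon x
    rw [Finset.mem_range]
    omega
  have hinjO : Set.InjOn (fun x => (f x - 1) / 2) O := by
    intro x hx y hy hxy
    simp only [O, Finset.coe_filter, Set.mem_setOf_eq, Finset.mem_univ, true_and,
      Nat.not_even_iff_odd] at hx hy
    obtain ⟨t, ht⟩ := hx
    obtain ⟨s, hs⟩ := hy
    simp only at hxy
    exact hinj (by omega)
  have := Finset.card_le_card_of_injOn _ hmapO hinjO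
  rw [Finset.card_range] at this
  omega
end

section
/- Any coprime labeling of the stacked triangular prism Y_{3,n} = C_3 □ P_n has largest label at least 4n − 1, and a coprime labeling with largest label exactly 4n − 1 exists; hence the minimum coprime number of Y_{3,n} is 4n − 1. -/
/-- The stacked prism `Y_{m,n} = C_m □ P_n`: vertices `(i, j)` with `i : Fin n`
(path coordinate) and `j : ZMod m` (cycle coordinate); edges `(i,j)(i+1,j)`
along the path and `(i,j)(i,j+1)` around each cycle. -/
def stackedPrism (m n : ℕ) : SimpleGraph (Fin n × ZMod m) :=
  SimpleGraph.fromRel (fun x y =>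
    (x.2 = y.2 ∧ (y.1 : ℕ) = (x.1 : ℕ) + 1) ∨
    (x.1 = y.1 ∧ y.2 = x.2 + 1))

/-- Label table for one period of 15 layers. -/
def Btab : List (List ℕ) :=
  [[1,3,2],[5,4,7],[8,9,11],[13,14,15],[16,17,19],[21,23,22],[25,26,27],
   [29,31,28],[32,35,33],[37,39,34],[41,38,43],[44,47,45],[49,51,46],
   [52,53,55],[57,58,59]]

def B (r k : ℕ) : ℕ := (Btab.getD r []).getD k 0

/-- The labeling: layer `i`, cycle position `k`. -/
def L (i k : ℕ) : ℕ := 60 * (i / 15) + B (i % 15) k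

/-- `P a b` certifies that `60*m + a` and `60*m + b` are coprime for all `m`. -/
def P (a b : ℕ) : Prop := a < b ∧ (b - a) ∣ 3600 ∧ Nat.Coprime a (b - a)

instance (a b : ℕ) : Decidable (P a b) := by unfold P; infer_instance

lemma cop60 {a b : ℕ} (m : ℕ) (h : P a b) :
    Nat.Coprime (60 * m + a) (60 * m + b) := by
  obtain ⟨hab, hdvd, hcop⟩ := h
  have hb : 60 * m + b = (b - a) + (60 * m + a) := by omega
  rw [hb, Nat.coprime_add_self_right]
  by_contra hg
  obtain ⟨p, pp, h1, h2⟩ := Nat.Prime.not_coprime_iff_dvd.mp hg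
  have h36 : p ∣ 60 * 60 := by
    have := h2.trans hdvd
    norm_num at this ⊢
    exact this
  have h60 : p ∣ 60 := (pp.dvd_mul.mp h36).elim id id
  have hpa : p ∣ a := by
    have hm : p ∣ 60 * m := h60.mul_right m
    exact (Nat.dvd_add_right hm).mp h1
  have hone : p ∣ 1 := hcop ▸ Nat.dvd_gcd hpa h2
  exact pp.ne_one (Nat.dvd_one.mp hone)

lemma Bbound : ∀ r < 15, ∀ k < 3, 1 ≤ B r k ∧ 4*r ≤ B r k + 2 ∧ B r k ≤ 4*r + 3 := by
  decide

lemma Bdist : ∀ r < 15, ∀ k < 3, ∀ k' < 3, k ≠ k' → B r k ≠ B r k' := by decide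

lemma Badj : ∀ r < 14, ∀ k < 3, ∀ k' < 3, B r k ≠ B (r+1) k' := by decide

lemma Btri : ∀ r < 15, ∀ k < 3, ∀ k' < 3, k ≠ k' →
    P (B r k) (B r k') ∨ P (B r k') (B r k) := by decide

lemma Bcross : ∀ r < 14, ∀ k < 3,
    P (B r k) (B (r+1) k) ∨ P (B (r+1) k) (B r k) := by decide

lemma Bcross14 : ∀ k < 3, P (B 14 k) (60 + B 0 k) := by decide

lemma L_bounds (i k : ℕ) (hk : k < 3) :
    1 ≤ L i k ∧ 4*i ≤ L i k + 2 ∧ L i k ≤ 4*i + 3 := by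
  have h := Bbound (i % 15) (by omega) k hk
  unfold L
  omega

lemma L_tri (i k k' : ℕ) (hk : k < 3) (hk' : k' < 3) (hne : k ≠ k') :
    Nat.Coprime (L i k) (L i k') := by
  rcases Btri (i % 15) (by omega) k hk k' hk' hne with h | h
  · exact cop60 (i / 15) h
  · exact (cop60 (i / 15) h).symm

lemma L_cross (i k : ℕ) (hk : k < 3) : Nat.Coprime (L i k) (L (i+1) k) := by
  rcases Nat.lt_or_ge (i % 15) 14 with hr | hr
  · have e1 : (i+1) % 15 = i % 15 + 1 := by omega
    have e2 : (i+1) / 15 = i / 15 := by omega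
    unfold L
    rw [e1, e2]
    rcases Bcross (i % 15) hr k hk with h | h
    · exact cop60 (i / 15) h
    · exact (cop60 (i / 15) h).symm
  · have hr14 : i % 15 = 14 := by omega
    have e1 : (i+1) % 15 = 0 := by omega
    have e2 : (i+1) / 15 = i / 15 + 1 := by omega
    unfold L
    rw [e1, e2, hr14]
    have h := cop60 (i / 15) (Bcross14 k hk)
    have e3 : 60 * (i / 15 + 1) + B 0 k = 60 * (i / 15) + (60 + B 0 k) := by ring
    rw [e3]
    exact h

lemma L_inj : ∀ i k i' k', k < 3 → k' < 3 → i ≤ i' → L i k = L i' k' →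
    i = i' ∧ k = k' := by
  intro i k i' k' hk hk' hle heq
  have b1 := L_bounds i k hk
  have b2 := L_bounds i' k' hk'
  have hcase : i' = i ∨ i' = i + 1 := by omega
  rcases hcase with rfl | rfl
  · refine ⟨rfl, ?_⟩
    by_contra hne
    exact Bdist (i' % 15) (Nat.mod_lt _ (by norm_num)) k hk k' hk' hne
      (by unfold L at heq; omega)
  · exfalso
    rcases Nat.lt_or_ge (i % 15) 14 with hr | hr
    · have e1 : (i+1) % 15 = i % 15 + 1 := by omega
      have e2 : (i+1) / 15 = i / 15 := by omega
      apply Badj (i % 15) hr k hk k' hk'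
      unfold L at heq
      rw [e1, e2] at heq
      omega
    · have hr14 : i % 15 = 14 := by omega
      have e1 : (i+1) % 15 = 0 := by omega
      have e2 : (i+1) / 15 = i / 15 + 1 := by omega
      unfold L at heq
      rw [e1, e2, hr14] at heq
      have h14 := Bbound 14 (by norm_num) k hk
      have h0 := Bbound 0 (by norm_num) k' hk'
      omega

lemma zmod3_val_lt (a : ZMod 3) : a.val < 3 := ZMod.val_lt a

lemma zmod3_succ_ne (a : ZMod 3) : (a + 1).val ≠ a.val := by
  revert a; decide

lemma zmod3_ne_cases : ∀ a b : ZMod 3, a ≠ b → b = a + 1 ∨ a = b + 1 := by decide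

theorem stackedTriangularPrism_minCoprime (n : ℕ) (hn : 1 ≤ n) :
    (∀ f : Fin n × ZMod 3 → ℕ, Function.Injective f → (∀ x, 1 ≤ f x) →
      (∀ x y, (stackedPrism 3 n).Adj x y → Nat.Coprime (f x) (f y)) →
      ∃ x, 4 * n - 1 ≤ f x) ∧
    (∃ f : Fin n × ZMod 3 → ℕ, Function.Injective f ∧
      (∀ x, f x ∈ Finset.Icc 1 (4 * n - 1)) ∧
      (∀ x y, (stackedPrism 3 n).Adj x y → Nat.Coprime (f x) (f y))) := by
  constructor
  · -- lower bound
    intro f hinj hpos hcop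
    by_contra hcon
    push_neg at hcon
    -- every label is at most 4n-2
    have hub : ∀ x, f x ≤ 4 * n - 2 := by
      intro x
      have := hcon x
      omega
    -- no two adjacent labels both even
    have hnoteven : ∀ x y, (stackedPrism 3 n).Adj x y → ¬ (2 ∣ f x ∧ 2 ∣ f y) := by
      rintro x y hadj ⟨h1, h2⟩
      have hc := hcop x y hadj
      have : (2:ℕ) ∣ 1 := hc ▸ Nat.dvd_gcd h1 h2
      omega
    -- same-layer distinct vertices are adjacent
    have hlayer : ∀ x y : Fin n × ZMod 3, x ≠ y → x.1 = y.1 →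
        (stackedPrism 3 n).Adj x y := by
      intro x y hne h1
      rw [stackedPrism, SimpleGraph.fromRel_adj]
      refine ⟨hne, ?_⟩
      have h2 : x.2 ≠ y.2 := by
        intro h
        exact hne (Prod.ext h1 h)
      rcases zmod3_ne_cases x.2 y.2 h2 with h | h
      · exact Or.inl (Or.inr ⟨h1, h⟩)
      · exact Or.inr (Or.inr ⟨h1.symm, h⟩)
    classical
    set E := Finset.univ.filter (fun x : Fin n × ZMod 3 => 2 ∣ f x) with hE
    set O := Finset.univ.filter (fun x : Fin n × ZMod 3 => ¬ 2 ∣ f x) with hO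
    have hEcard : E.card ≤ n := by
      have hle : E.card ≤ (Finset.univ : Finset (Fin n)).card := by
        apply Finset.card_le_card_of_injOn (fun x => x.1)
          (fun x _ => Finset.mem_univ _)
        intro x hx y hy hxy
        by_contra hne
        have hadj := hlayer x y hne hxy
        simp only [hE, Finset.mem_coe, Finset.mem_filter] at hx hy
        exact hnoteven x y hadj ⟨hx.2, hy.2⟩
      simpa using hle
    have hOcard : O.card ≤ 2 * n - 1 := by
      have hle : O.card ≤ (Finset.range (2 * n - 1)).card := by
        apply Finset.card_le_card_of_injOn (fun x => (f x - 1) / 2) ?_ ?_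
        · intro x hx
          simp only [hO, Finset.mem_coe, Finset.mem_filter] at hx
          have h1 := hpos x
          have h2 := hub x
          have h3 := hx.2
          simp only [Finset.mem_coe, Finset.mem_range]
          omega
        · intro x hx y hy hxy
          simp only [hO, Finset.mem_coe, Finset.mem_filter] at hx hy
          apply hinj
          have h1 := hpos x
          have h2 := hpos y
          have h3 := hx.2
          have h4 := hy.2
          simp only at hxy
          omega
      simpa using hle
    have hsplit : E.card + O.card = (Finset.univ : Finset (Fin n × ZMod 3)).card :=
      Finset.card_filter_add_card_filter_not _
    have huniv : (Finset.univ : Finset (Fin n × ZMod 3)).card = n * 3 := by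
      simp [Finset.card_univ]
    omega
  · -- construction
    refine ⟨fun x => L x.1.val x.2.val, ?_, ?_, ?_⟩
    · intro x y heq
      have hk : x.2.val < 3 := zmod3_val_lt x.2
      have hk' : y.2.val < 3 := zmod3_val_lt y.2
      have key : x.1.val = y.1.val ∧ x.2.val = y.2.val := by
        rcases le_total x.1.val y.1.val with hle | hle
        · exact L_inj _ _ _ _ hk hk' hle heq
        · obtain ⟨h1, h2⟩ := L_inj _ _ _ _ hk' hk hle heq.symm
          exact ⟨h1.symm, h2.symm⟩
      exact Prod.ext (Fin.val_injective key.1) (ZMod.val_injective 3 key.2)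
    · intro x
      have hk : x.2.val < 3 := zmod3_val_lt x.2
      have hb := L_bounds x.1.val x.2.val hk
      have hi : x.1.val < n := x.1.isLt
      simp only [Finset.mem_Icc]
      omega
    · intro x y hadj
      rw [stackedPrism, SimpleGraph.fromRel_adj] at hadj
      obtain ⟨hne, hrel⟩ := hadj
      have hkx : x.2.val < 3 := zmod3_val_lt x.2
      have hky : y.2.val < 3 := zmod3_val_lt y.2
      show Nat.Coprime (L x.1.val x.2.val) (L y.1.val y.2.val)
      rcases hrel with (⟨hc, hs⟩ | ⟨hr, hcyc⟩) | (⟨hc, hs⟩ | ⟨hr, hcyc⟩)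
      · -- y.1 = x.1 + 1, same column
        rw [hs, show y.2 = x.2 from hc.symm]
        exact L_cross x.1.val x.2.val hkx
      · -- same row, y.2 = x.2 + 1
        rw [hr]
        apply L_tri _ _ _ hkx hky
        rw [hcyc]
        exact (zmod3_succ_ne x.2).symm
      · -- rel y x : x.1 = y.1 + 1, same column
        rw [hs, show x.2 = y.2 from hc.symm]
        exact (L_cross y.1.val y.2.val hky).symm
      · -- same row, x.2 = y.2 + 1
        rw [← hr]
        apply L_tri _ _ _ hkx hky
        rw [hcyc]
        exact zmod3_succ_ne y.2
end

section
/- If k ≥ 2 is even, then the graph GP*(2k,k) does not admit a prime labeling; equivalently, its independence number is strictly less than 2k. -/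
lemma gp_indep_bound (k : ℕ) (hk : 2 ≤ k) (heven : Even k)
    (s : Finset (ZMod (2 * k) ⊕ ZMod (2 * k)))
    (hs : IsIndepFinset (genPetersen (2 * k) k) s) : s.card < 2 * k := by
  haveI : NeZero (2 * k) := ⟨by omega⟩
  haveI : Fact (1 < 2 * k) := ⟨by omega⟩
  by_contra hcard
  push_neg at hcard
  have hone : (1 : ZMod (2 * k)) ≠ 0 := one_ne_zero
  have hkz : ((k : ℕ) : ZMod (2 * k)) ≠ 0 := by
    intro h
    rw [ZMod.natCast_eq_zero_iff] at h
    exact absurd (Nat.le_of_dvd (by omega) h) (by omega)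
  have hkk : ((k : ℕ) : ZMod (2 * k)) + ((k : ℕ) : ZMod (2 * k)) = 0 := by
    have : (((2 * k : ℕ) : ZMod (2 * k)) : ZMod (2 * k)) = 0 := ZMod.natCast_self _
    push_cast at this
    linear_combination this
  -- adjacency lemmas
  have adjO : ∀ i : ZMod (2 * k),
      (genPetersen (2 * k) k).Adj (Sum.inl i) (Sum.inl (i + 1)) := by
    intro i
    rw [genPetersen, SimpleGraph.fromRel_adj]
    refine ⟨?_, Or.inl (Or.inl ⟨i, rfl, rfl⟩)⟩
    intro h
    exact hone (left_eq_add.mp (Sum.inl.inj h))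
  have adjI : ∀ i : ZMod (2 * k),
      (genPetersen (2 * k) k).Adj (Sum.inr i) (Sum.inr (i + (k : ZMod (2 * k)))) := by
    intro i
    rw [genPetersen, SimpleGraph.fromRel_adj]
    refine ⟨?_, Or.inl (Or.inr (Or.inl ⟨i, rfl, rfl⟩))⟩
    intro h
    exact hkz (left_eq_add.mp (Sum.inr.inj h))
  have adjS : ∀ i : ZMod (2 * k),
      (genPetersen (2 * k) k).Adj (Sum.inl i) (Sum.inr i) := by
    intro i
    rw [genPetersen, SimpleGraph.fromRel_adj]
    exact ⟨by simp, Or.inl (Or.inr (Or.inr ⟨i, rfl, rfl⟩))⟩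
  have hIO : ∀ i : ZMod (2 * k), Sum.inl i ∈ s → Sum.inl (i + 1) ∉ s :=
    fun i h1 h2 => hs _ h1 _ h2 (adjO i)
  have hII : ∀ i : ZMod (2 * k), Sum.inr i ∈ s →
      Sum.inr (i + (k : ZMod (2 * k))) ∉ s :=
    fun i h1 h2 => hs _ h1 _ h2 (adjI i)
  -- the projection is injective on s
  set g : ZMod (2 * k) ⊕ ZMod (2 * k) → ZMod (2 * k) := Sum.elim id id with hg
  have hinj : Set.InjOn g s := by
    intro x hx y hy hxy
    by_contra hne
    cases x with
    | inl a =>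
      cases y with
      | inl b => exact hne (by simp only [hg, Sum.elim_inl, id] at hxy; rw [hxy])
      | inr b =>
        simp only [hg, Sum.elim_inl, Sum.elim_inr, id] at hxy
        subst hxy
        exact hs _ hx _ hy (adjS a)
    | inr a =>
      cases y with
      | inl b =>
        simp only [hg, Sum.elim_inl, Sum.elim_inr, id] at hxy
        subst hxy
        exact hs _ hy _ hx (adjS a)
      | inr b => exact hne (by simp only [hg, Sum.elim_inr, id] at hxy; rw [hxy])
  have hcardZ : Fintype.card (ZMod (2 * k)) = 2 * k := ZMod.card _
  have himg : s.image g = Finset.univ := by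
    apply Finset.eq_univ_of_card
    have h1 : (s.image g).card = s.card := Finset.card_image_of_injOn hinj
    have h2 : (s.image g).card ≤ 2 * k := by
      calc (s.image g).card ≤ Finset.univ.card := Finset.card_le_card (Finset.subset_univ _)
        _ = 2 * k := by rw [Finset.card_univ, hcardZ]
    rw [hcardZ]
    omega
  have hsurj : ∀ i : ZMod (2 * k), Sum.inl i ∈ s ∨ Sum.inr i ∈ s := by
    intro i
    have : i ∈ s.image g := himg ▸ Finset.mem_univ i
    obtain ⟨x, hx, hgx⟩ := Finset.mem_image.mp this
    cases x with
    | inl a =>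
      left
      simp only [hg, Sum.elim_inl, id] at hgx
      rwa [hgx] at hx
    | inr a =>
      right
      simp only [hg, Sum.elim_inr, id] at hgx
      rwa [hgx] at hx
  -- key step: inl i ∈ s → inl (i+2) ∈ s
  have step : ∀ i : ZMod (2 * k), Sum.inl i ∈ s → Sum.inl (i + 2) ∈ s := by
    intro i hi
    have h1 : Sum.inl (i + 1) ∉ s := hIO i hi
    have h2 : Sum.inr (i + 1) ∈ s := (hsurj (i + 1)).resolve_left h1
    have h3 : Sum.inr (i + 1 + (k : ZMod (2 * k))) ∉ s := hII _ h2
    have h4 : Sum.inl (i + 1 + (k : ZMod (2 * k))) ∈ s :=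
      (hsurj _).resolve_right h3
    have h5 : Sum.inl (i + 1 + (k : ZMod (2 * k)) + 1) ∉ s := hIO _ h4
    have he1 : i + 1 + (k : ZMod (2 * k)) + 1 = i + 2 + (k : ZMod (2 * k)) := by ring
    rw [he1] at h5
    have h6 : Sum.inr (i + 2 + (k : ZMod (2 * k))) ∈ s := (hsurj _).resolve_left h5
    have h7 : Sum.inr (i + 2 + (k : ZMod (2 * k)) + (k : ZMod (2 * k))) ∉ s := hII _ h6
    have he2 : i + 2 + (k : ZMod (2 * k)) + (k : ZMod (2 * k)) = i + 2 := by
      rw [add_assoc, hkk, add_zero]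
    rw [he2] at h7
    exact (hsurj _).resolve_right h7
  have hiter : ∀ (j : ℕ) (i : ZMod (2 * k)),
      Sum.inl i ∈ s → Sum.inl (i + ((2 * j : ℕ) : ZMod (2 * k))) ∈ s := by
    intro j
    induction j with
    | zero => intro i hi; simpa using hi
    | succ m ih =>
      intro i hi
      have := ih (i + 2) (step i hi)
      have he : i + 2 + ((2 * m : ℕ) : ZMod (2 * k))
          = i + ((2 * (m + 1) : ℕ) : ZMod (2 * k)) := by
        push_cast
        ring
      rwa [he] at this
  -- a base point
  have hbase : ∃ i : ZMod (2 * k), Sum.inl i ∈ s := by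
    rcases hsurj 0 with h | h
    · exact ⟨0, h⟩
    · exact ⟨0 + (k : ZMod (2 * k)), (hsurj _).resolve_right (hII 0 h)⟩
  obtain ⟨i0, hi0⟩ := hbase
  obtain ⟨m, hm⟩ := heven
  have hik : Sum.inl (i0 + (k : ZMod (2 * k))) ∈ s := by
    have := hiter m i0 hi0
    have he : ((2 * m : ℕ) : ZMod (2 * k)) = ((k : ℕ) : ZMod (2 * k)) := by
      congr 1
      omega
    rwa [he] at this
  -- final contradiction
  have h1 : Sum.inl (i0 + 1) ∉ s := hIO i0 hi0
  have h2 : Sum.inr (i0 + 1) ∈ s := (hsurj _).resolve_left h1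
  have h3 : Sum.inr (i0 + 1 + (k : ZMod (2 * k))) ∉ s := hII _ h2
  have h4 : Sum.inl (i0 + 1 + (k : ZMod (2 * k))) ∈ s := (hsurj _).resolve_right h3
  have h5 : Sum.inl (i0 + (k : ZMod (2 * k)) + 1) ∉ s := hIO _ hik
  have he : i0 + 1 + (k : ZMod (2 * k)) = i0 + (k : ZMod (2 * k)) + 1 := by ring
  rw [he] at h4
  exact h5 h4

/-- For `n = 2k`, `GP*(2k,k)` is the graph `genPetersen (2k) k`: each inner vertex
`u_i` has degree 2 and the inner vertices form `k` disjoint edges. -/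
theorem gpStar_even_not_prime (k : ℕ) (hk : 2 ≤ k) (heven : Even k) :
    (¬ ∃ f : ZMod (2 * k) ⊕ ZMod (2 * k) → ℕ, Function.Injective f ∧
        (∀ x, f x ∈ Finset.Icc 1 (4 * k)) ∧
        (∀ x y, (genPetersen (2 * k) k).Adj x y → Nat.Coprime (f x) (f y))) ∧
    (∀ s : Finset (ZMod (2 * k) ⊕ ZMod (2 * k)),
      IsIndepFinset (genPetersen (2 * k) k) s → s.card < 2 * k) := by
  haveI : NeZero (2 * k) := ⟨by omega⟩
  refine ⟨?_, fun s hs => gp_indep_bound k hk heven s hs⟩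
  rintro ⟨f, hinj, hrange, hcop⟩
  -- the set of vertices with even labels
  set s : Finset (ZMod (2 * k) ⊕ ZMod (2 * k)) :=
    Finset.univ.filter (fun x => Even (f x)) with hsdef
  have hindep : IsIndepFinset (genPetersen (2 * k) k) s := by
    intro x hx y hy hadj
    rw [hsdef, Finset.mem_filter] at hx hy
    have hco := hcop x y hadj
    have h2 : 2 ∣ Nat.gcd (f x) (f y) := Nat.dvd_gcd hx.2.two_dvd hy.2.two_dvd
    rw [Nat.Coprime] at hco
    rw [hco] at h2
    omega
  have hlt : s.card < 2 * k := gp_indep_bound k hk heven s hindep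
  -- but s has exactly 2k elements
  have hcardV : Fintype.card (ZMod (2 * k) ⊕ ZMod (2 * k)) = 4 * k := by
    rw [Fintype.card_sum, ZMod.card]
    omega
  have himg : Finset.univ.image f = Finset.Icc 1 (4 * k) := by
    apply Finset.eq_of_subset_of_card_le
    · intro a ha
      obtain ⟨x, _, rfl⟩ := Finset.mem_image.mp ha
      exact hrange x
    · rw [Finset.card_image_of_injective _ hinj, Finset.card_univ, hcardV,
        Nat.card_Icc]
      omega
  have hsimg : s.image f = (Finset.Icc 1 (4 * k)).filter (fun n => Even n) := by
    rw [hsdef, ← himg, Finset.filter_image]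
  have hevens : ((Finset.Icc 1 (4 * k)).filter (fun n => Even n))
      = (Finset.Icc 1 (2 * k)).image (fun m => 2 * m) := by
    ext a
    simp only [Finset.mem_filter, Finset.mem_Icc, Finset.mem_image]
    constructor
    · rintro ⟨⟨h1, h2⟩, m, hm⟩
      exact ⟨m, ⟨by omega, by omega⟩, by omega⟩
    · rintro ⟨m, ⟨hm1, hm2⟩, rfl⟩
      exact ⟨⟨by omega, by omega⟩, m, by omega⟩
  have hcards : s.card = 2 * k := by
    have h1 : s.card = (s.image f).card :=
      (Finset.card_image_of_injective _ hinj).symm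
    rw [h1, hsimg, hevens,
      Finset.card_image_of_injective _ (mul_right_injective₀ (two_ne_zero) : Function.Injective (fun m : ℕ => 2 * m)),
      Nat.card_Icc]
    omega
  omega
end
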